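/- Let n ≥ 1 and for each k ∈ ℕ let S_k denote the space of homogeneous polynomials of degree k in ℂ[X_1,…,X_n] (with S_0 = ℂ). Let F be a submultiplicative filtration on the graded algebra ⊕_k S_k: for each k and t ∈ ℝ a subspace F^t S_k ⊆ S_k, non-increasing in t, equal to S_k for t sufficiently small and to 0 for t sufficiently big, with F^t S_k · F^s S_l ⊆ F^{t+s} S_{k+l} for all t, s ∈ ℝ and k, l ∈ ℕ. Let φ : ℝ → ℝ be convex and non-increasing. For k ≥ 1 let N_k := dim S_k and let e_1(k) ≥ ⋯ ≥ e_{N_k}(k) be the jumping numbers of F on S_k. Then the sequence u(k) := (k/N_k) · Σ_{j=1}^{N_k} φ(e_j(k)/k) is subadditive: u(k+l) ≤ u(k) + u(l) for all k, l ≥ 1. -/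

import Mathlib

open Finset

namespace Stmt8




/-! ### List lemmas -/

lemma sum_range_getD (l : List ℝ) (f : ℝ → ℝ) :
    ∑ j ∈ Finset.range l.length, f (l.getD j 0) = (l.map f).sum := by
  induction l with
  | nil => simp
  | cons x xs ih =>
    rw [List.length_cons, Finset.sum_range_succ', List.map_cons, List.sum_cons]
    simp only [List.getD_cons_succ, List.getD_cons_zero]
    rw [ih, add_comm]

lemma getD_mem_of_lt {l : List ℝ} {j : ℕ} (hj : j < l.length) : l.getD j 0 ∈ l := by
  rw [List.getD_eq_getElem l 0 hj]
  exact List.getElem_mem hj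

lemma sorted_le_countP_of_lt {l : List ℝ} (hl : l.Pairwise (· ≥ ·)) {j : ℕ} (hj : j < l.length)
    {t : ℝ} (ht : t < l.getD j 0) :
    j + 1 ≤ (l.filter (fun x => decide (t < x))).length := by
  induction l generalizing j with
  | nil => simp at hj
  | cons x xs ih =>
    rw [List.pairwise_cons] at hl
    cases j with
    | zero =>
      have hx : t < x := by simpa using ht
      rw [List.filter_cons_of_pos (by simpa using hx)]
      simp
    | succ j =>
      have hj' : j < xs.length := by simpa using hj
      have ht' : t < xs.getD j 0 := by simpa using ht
      have h1 := ih hl.2 hj' ht'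
      have hx : t < x := lt_of_lt_of_le ht' (hl.1 _ (getD_mem_of_lt hj'))
      rw [List.filter_cons_of_pos (by simpa using hx), List.length_cons]
      omega

lemma sorted_le_getD_of_countP {l : List ℝ} (hl : l.Pairwise (· ≥ ·)) {j : ℕ} (hj : j < l.length)
    {t : ℝ} (hc : j + 1 ≤ (l.filter (fun x => decide (t ≤ x))).length) :
    t ≤ l.getD j 0 := by
  induction l generalizing j with
  | nil => simp at hj
  | cons x xs ih =>
    rw [List.pairwise_cons] at hl
    cases j with
    | zero =>
      have hpos : 0 < (List.filter (fun x => decide (t ≤ x)) (x :: xs)).length := by omega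
      obtain ⟨y, hy⟩ := List.exists_mem_of_length_pos hpos
      have hy' := List.mem_filter.1 hy
      have hty : t ≤ y := by simpa using hy'.2
      have : y = x ∨ y ∈ xs := by simpa using hy'.1
      rcases this with rfl | hmem
      · simpa using hty
      · simpa using hty.trans (hl.1 _ hmem)
    | succ j =>
      have hj' : j < xs.length := by simpa using hj
      have : (List.filter (fun x => decide (t ≤ x)) xs).length + 1 ≥
          (List.filter (fun x => decide (t ≤ x)) (x :: xs)).length := by
        rw [List.filter_cons]
        split <;> simp
      have hc' : j + 1 ≤ (xs.filter (fun x => decide (t ≤ x))).length := by omega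
      simpa using ih hl.2 hj' hc'

/-! ### Monomials of degree k -/

variable {n : ℕ}

/-- The finset of exponents of total degree `k`. -/
noncomputable def Mon (n k : ℕ) : Finset (Fin n →₀ ℕ) :=
  Finset.finsuppAntidiag Finset.univ k

lemma mem_Mon {k : ℕ} {d : Fin n →₀ ℕ} : d ∈ Mon n k ↔ ∑ i, d i = k := by
  simp [Mon, Finset.mem_finsuppAntidiag]

lemma degree_eq_sum_univ (d : Fin n →₀ ℕ) : d.degree = ∑ i, d i := by
  rw [Finsupp.degree]
  exact Finset.sum_subset (Finset.subset_univ _)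
    (fun i _ hi => Finsupp.notMem_support_iff.1 hi)

lemma support_subset_Mon {k : ℕ} {p : MvPolynomial (Fin n) ℂ}
    (hp : p ∈ MvPolynomial.homogeneousSubmodule (Fin n) ℂ k) :
    p.support ⊆ Mon n k := by
  intro d hd
  rw [mem_Mon, ← degree_eq_sum_univ]
  have h := (MvPolynomial.mem_homogeneousSubmodule _ _).1 hp (MvPolynomial.mem_support_iff.1 hd)
  rw [Finsupp.degree_eq_weight_one]
  exact h

/-! ### Leading monomial -/

noncomputable def lm (p : MvPolynomial (Fin n) ℂ) : Lex (Fin n →₀ ℕ) :=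
  AddMonoidAlgebra.supDegree toLex p

lemma lm_exists {p : MvPolynomial (Fin n) ℂ} (hp : p ≠ 0) :
    ∃ d ∈ p.support, lm p = toLex d :=
  AddMonoidAlgebra.exists_supDegree_mem_support _ hp

lemma le_lm_of_mem {p : MvPolynomial (Fin n) ℂ} {d : Fin n →₀ ℕ} (h : d ∈ p.support) :
    toLex d ≤ lm p :=
  Finset.le_sup h

lemma lm_mul {p q : MvPolynomial (Fin n) ℂ} (hp : p ≠ 0) (hq : q ≠ 0) :
    lm (p * q) = lm p + lm q :=
  AddMonoidAlgebra.supDegree_mul toLex.injective (fun _ _ => rfl)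
    (mul_ne_zero ((AddMonoidAlgebra.leadingCoeff_ne_zero toLex.injective).2 hp)
      ((AddMonoidAlgebra.leadingCoeff_ne_zero toLex.injective).2 hq)) hp hq

lemma lm_monomial (d : Fin n →₀ ℕ) : lm (MvPolynomial.monomial d (1 : ℂ)) = toLex d := by
  rw [← MvPolynomial.single_eq_monomial]
  exact AddMonoidAlgebra.supDegree_single_ne_zero d one_ne_zero

lemma lm_smul {c : ℂ} (hc : c ≠ 0) (p : MvPolynomial (Fin n) ℂ) : lm (c • p) = lm p := by
  exact congrArg (fun s : Finset (Fin n →₀ ℕ) => s.sup ⇑toLex)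
    (MvPolynomial.support_smul_eq hc p)

lemma monomial_one_ne_zero (d : Fin n →₀ ℕ) : (MvPolynomial.monomial d (1 : ℂ)) ≠ 0 := by
  simp [MvPolynomial.monomial_eq_zero]

/-! ### Dimension equals number of leading monomials -/

noncomputable def DF (n k : ℕ) (V : Submodule ℂ (MvPolynomial (Fin n) ℂ)) :
    Finset (Fin n →₀ ℕ) :=
  @Finset.filter _ (fun d => ∃ p ∈ V, p ≠ 0 ∧ lm p = toLex d) (Classical.decPred _) (Mon n k)

lemma mem_DF {k : ℕ} {V : Submodule ℂ (MvPolynomial (Fin n) ℂ)} {d : Fin n →₀ ℕ} :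
    d ∈ DF n k V ↔ d ∈ Mon n k ∧ ∃ p ∈ V, p ≠ 0 ∧ lm p = toLex d := by
  letI : DecidablePred (fun d : Fin n →₀ ℕ => ∃ p ∈ V, p ≠ 0 ∧ lm p = toLex d) :=
    Classical.decPred _
  rw [DF]
  exact Finset.mem_filter

lemma finrank_eq_card_DF {k : ℕ} (V : Submodule ℂ (MvPolynomial (Fin n) ℂ))
    (hV : V ≤ MvPolynomial.homogeneousSubmodule (Fin n) ℂ k) :
    Module.finrank ℂ V = (DF n k V).card := by
  classical
  let f : V →ₗ[ℂ] ((DF n k V) → ℂ) :=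
    { toFun := fun v d => MvPolynomial.coeff d.1 v.1
      map_add' := by intros; funext d; simp
      map_smul' := by intros; funext d; simp }
  have hf : Function.Injective f := by
    rw [injective_iff_map_eq_zero]
    rintro ⟨p, hp⟩ h0
    rw [Submodule.mk_eq_zero]
    by_contra hne
    obtain ⟨d, hd, hlm⟩ := lm_exists hne
    have hdM : d ∈ DF n k V := mem_DF.2 ⟨support_subset_Mon (hV hp) hd, p, hp, hne, hlm⟩
    have h1 := congrFun h0 ⟨d, hdM⟩
    simp only [f, LinearMap.coe_mk, AddHom.coe_mk, Pi.zero_apply] at h1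
    exact (MvPolynomial.mem_support_iff.1 hd) h1
  haveI : FiniteDimensional ℂ V := FiniteDimensional.of_injective f hf
  apply le_antisymm
  · calc Module.finrank ℂ V ≤ Module.finrank ℂ ((DF n k V) → ℂ) :=
        LinearMap.finrank_le_finrank_of_injective hf
      _ = (DF n k V).card := by rw [Module.finrank_pi]; exact Fintype.card_coe _
  · have hw : ∀ d ∈ DF n k V, ∃ p, p ∈ V ∧ p ≠ 0 ∧ lm p = toLex d := by
      intro d hd
      obtain ⟨hd1, p, h1, h2, h3⟩ := mem_DF.1 hd
      exact ⟨p, h1, h2, h3⟩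
    choose w hw1 hw2 hw3 using hw
    set v : (DF n k V) → V := fun d => ⟨w d.1 d.2, hw1 d.1 d.2⟩ with hv
    have hind : LinearIndependent ℂ v := by
      apply LinearIndependent.of_comp V.subtype
      rw [linearIndependent_iff']
      intro s g hsum i hi
      by_contra hgi
      have hne : ∑ j ∈ s.filter (fun j => g j ≠ 0), g j • (V.subtype ∘ v) j ≠ 0 := by
        apply AddMonoidAlgebra.sum_ne_zero_of_injOn_supDegree' (D := ⇑(toLex (α := Fin n →₀ ℕ)))
        · exact ⟨i, Finset.mem_filter.2 ⟨hi, hgi⟩,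
            smul_ne_zero hgi (hw2 i.1 i.2)⟩
        · intro a ha b hb hab
          simp only [Finset.coe_filter, Set.mem_setOf_eq] at ha hb
          have ha' : AddMonoidAlgebra.supDegree toLex (g a • (V.subtype ∘ v) a) = toLex a.1 := by
            show lm _ = _
            rw [lm_smul ha.2]
            exact hw3 a.1 a.2
          have hb' : AddMonoidAlgebra.supDegree toLex (g b • (V.subtype ∘ v) b) = toLex b.1 := by
            show lm _ = _
            rw [lm_smul hb.2]
            exact hw3 b.1 b.2
          have : toLex a.1 = toLex b.1 := by
            rw [← ha', ← hb']; exact hab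
          exact Subtype.ext (toLex.injective this)
      apply hne
      have heq : ∑ j ∈ s.filter (fun j => g j ≠ 0), g j • (V.subtype ∘ v) j
          = ∑ j ∈ s, g j • (V.subtype ∘ v) j :=
        Finset.sum_filter_of_ne (fun x _ hx => by
          contrapose! hx
          rw [hx, zero_smul])
      rw [heq]
      exact hsum
    have h2 := hind.fintype_card_le_finrank
    exact le_trans (le_of_eq (Fintype.card_coe _).symm) h2

lemma DF_top {k : ℕ} : DF n k (MvPolynomial.homogeneousSubmodule (Fin n) ℂ k) = Mon n k := by
  apply Finset.Subset.antisymm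
  · intro d hd; exact (mem_DF.1 hd).1
  · intro d hd
    refine mem_DF.2 ⟨hd, MvPolynomial.monomial d 1, ?_, monomial_one_ne_zero d, lm_monomial d⟩
    rw [MvPolynomial.mem_homogeneousSubmodule]
    exact MvPolynomial.isHomogeneous_monomial _ (by rw [degree_eq_sum_univ, ← mem_Mon]; exact hd)

lemma finrank_homogeneous {k : ℕ} :
    Module.finrank ℂ (MvPolynomial.homogeneousSubmodule (Fin n) ℂ k) = (Mon n k).card := by
  rw [finrank_eq_card_DF _ le_rfl, DF_top]


/-! ### Power series computations -/

lemma coeff_one_add_X_pow_ps (M j : ℕ) :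
    (PowerSeries.coeff j) ((1 + PowerSeries.X) ^ M) = (M.choose j : ℤ) := by
  rw [← Polynomial.coe_one, ← Polynomial.coe_X, ← Polynomial.coe_add, ← Polynomial.coe_pow,
    Polynomial.coeff_coe, Polynomial.coeff_one_add_X_pow]

lemma prod_invOneSubPow {m : ℕ} (α : Fin m → ℕ) :
    ∏ i : Fin m, PowerSeries.invOneSubPow ℤ (α i + 1)
      = PowerSeries.invOneSubPow ℤ (∑ i, (α i + 1)) := by
  simp_rw [PowerSeries.invOneSubPow_eq_inv_one_sub_pow]
  rw [prod_pow_eq_pow_sum]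

/-- Row sums of the coupling weights. -/
lemma rowsum (m k l : ℕ) (α : Fin (m+1) →₀ ℕ) (hα : ∑ i, α i = k) :
    ∑ β ∈ Mon (m+1) l, ∏ i, (α i + β i).choose (α i) = (k + m + l).choose (k + m) := by
  have hsum : ∑ i : Fin (m+1), (α i + 1) = (k + m) + 1 := by
    rw [Finset.sum_add_distrib, hα]
    simp [add_assoc]
  have hprod : ∏ i : Fin (m+1), PowerSeries.invOneSubPow ℤ (α i + 1)
      = PowerSeries.invOneSubPow ℤ ((k + m) + 1) := by
    rw [prod_invOneSubPow (fun i => α i), hsum]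
  have hcoeff := congrArg (fun z : (PowerSeries ℤ)ˣ => (PowerSeries.coeff l) z.val) hprod
  rw [show ((∏ i : Fin (m+1), PowerSeries.invOneSubPow ℤ (α i + 1) : (PowerSeries ℤ)ˣ) : PowerSeries ℤ)
      = ∏ i : Fin (m+1), ((PowerSeries.invOneSubPow ℤ (α i + 1) : (PowerSeries ℤ)ˣ) : PowerSeries ℤ)
    from map_prod (Units.coeHom (PowerSeries ℤ)) _ _] at hcoeff
  rw [PowerSeries.coeff_prod] at hcoeff
  simp only [PowerSeries.invOneSubPow_val_succ_eq_mk_add_choose, PowerSeries.coeff_mk] at hcoeff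
  have : ((∑ β ∈ Mon (m+1) l, ∏ i, (α i + β i).choose (α i) : ℕ) : ℤ)
      = (((k + m) + l).choose (k + m) : ℤ) := by
    push_cast
    rw [← hcoeff]
    rfl
  exact_mod_cast this

lemma card_Mon (m l : ℕ) : (Mon (m+1) l).card = (m + l).choose m := by
  have h := rowsum m 0 l 0 (by simp)
  simpa using h

lemma colsum (m k l : ℕ) (β : Fin (m+1) →₀ ℕ) (hβ : ∑ i, β i = l) :
    ∑ α ∈ Mon (m+1) k, ∏ i, (α i + β i).choose (α i) = (l + m + k).choose (l + m) := by
  have h := rowsum m l k β hβ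
  rw [← h]
  apply Finset.sum_congr rfl
  intro α _
  apply Finset.prod_congr rfl
  intro i _
  rw [Nat.add_comm (α i) (β i), Nat.choose_symm_add]

/-- Fiber sums of the coupling weights. -/
lemma fibersum (n k l : ℕ) (γ : Fin n →₀ ℕ) (hγ : ∑ i, γ i = k + l) :
    ∑ p ∈ (Mon n k ×ˢ Mon n l).filter (fun p => p.1 + p.2 = γ),
        ∏ i, (p.1 i + p.2 i).choose (p.1 i) = (k + l).choose k := by
  classical
  -- step 1: rewrite summand using the fiber condition
  have step1 : ∑ p ∈ (Mon n k ×ˢ Mon n l).filter (fun p => p.1 + p.2 = γ),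
        ∏ i, (p.1 i + p.2 i).choose (p.1 i)
      = ∑ p ∈ (Mon n k ×ˢ Mon n l).filter (fun p => p.1 + p.2 = γ),
        ∏ i, (γ i).choose (p.1 i) := by
    apply Finset.sum_congr rfl
    intro p hp
    have hpγ : p.1 + p.2 = γ := (Finset.mem_filter.1 hp).2
    apply Finset.prod_congr rfl
    intro i _
    rw [← hpγ]
    rfl
  rw [step1]
  -- step 2: reindex by first component
  have step2 : ∑ p ∈ (Mon n k ×ˢ Mon n l).filter (fun p => p.1 + p.2 = γ),
        ∏ i, (γ i).choose (p.1 i)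
      = ∑ μ ∈ (Mon n k).filter (fun μ => ∀ i, μ i ≤ γ i), ∏ i, (γ i).choose (μ i) := by
    apply Finset.sum_nbij' (fun p => p.1) (fun μ => (μ, γ - μ))
    · intro p hp
      rw [Finset.mem_filter] at hp ⊢
      obtain ⟨hmem, hpγ⟩ := hp
      refine ⟨(Finset.mem_product.1 hmem).1, fun i => ?_⟩
      rw [← hpγ]
      exact Nat.le_add_right _ _
    · intro μ hμ
      rw [Finset.mem_filter] at hμ ⊢
      obtain ⟨hμk, hle⟩ := hμ
      have hsub : ∑ i, (γ - μ) i = l := by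
        have h1 : ∀ i, (γ - μ) i = γ i - μ i := fun i => Finsupp.tsub_apply γ μ i
        simp_rw [h1]
        rw [Finset.sum_tsub_distrib Finset.univ (fun i _ => hle i), hγ, mem_Mon.1 hμk]
        omega
      refine ⟨Finset.mem_product.2 ⟨hμk, mem_Mon.2 hsub⟩, ?_⟩
      ext i
      simp only [Finsupp.add_apply, Finsupp.tsub_apply]
      have h2 := hle i
      omega
    · intro p hp
      have hpγ : p.1 + p.2 = γ := (Finset.mem_filter.1 hp).2
      have hsnd : γ - p.1 = p.2 := by
        ext a
        rw [Finsupp.tsub_apply]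
        have h3 : p.1 a + p.2 a = γ a := by
          rw [← hpγ]
          rfl
        omega
      rw [Prod.ext_iff]
      exact ⟨rfl, hsnd⟩
    · intro μ hμ
      rfl
    · intro p hp
      rfl
  rw [step2]
  -- step 3: extend to all of Mon n k
  have step3 : ∑ μ ∈ (Mon n k).filter (fun μ => ∀ i, μ i ≤ γ i), ∏ i, (γ i).choose (μ i)
      = ∑ μ ∈ Mon n k, ∏ i, (γ i).choose (μ i) := by
    apply Finset.sum_subset (Finset.filter_subset _ _)
    intro μ hμ hnot
    rw [Finset.mem_filter, not_and] at hnot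
    push_neg at hnot
    obtain ⟨i, hi⟩ := hnot hμ
    exact Finset.prod_eq_zero (Finset.mem_univ i) (Nat.choose_eq_zero_of_lt hi)
  rw [step3]
  -- step 4: power series
  have hprod : ∏ i : Fin n, ((1 + PowerSeries.X : PowerSeries ℤ) ^ (γ i))
      = (1 + PowerSeries.X : PowerSeries ℤ) ^ (k + l) := by
    rw [prod_pow_eq_pow_sum, hγ]
  have hcoeff := congrArg (PowerSeries.coeff k) hprod
  rw [PowerSeries.coeff_prod, coeff_one_add_X_pow_ps] at hcoeff
  simp only [coeff_one_add_X_pow_ps] at hcoeff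
  have : ((∑ μ ∈ Mon n k, ∏ i, (γ i).choose (μ i) : ℕ) : ℤ) = ((k + l).choose k : ℤ) := by
    push_cast
    rw [← hcoeff]
    rfl
  exact_mod_cast this

/-! ### The cross binomial identity -/

lemma cross1 (m k l : ℕ) :
    ((k + l) + m).choose m * ((k + l).choose k)
      = ((k + m) + l).choose (k + m) * ((k + m).choose m) := by
  apply Nat.eq_of_mul_eq_mul_right
    (show 0 < k.factorial * l.factorial * m.factorial by positivity)
  have e2 : (k + l).choose k * l.factorial * k.factorial = (k + l).factorial := by
    have h := Nat.add_choose_mul_factorial_mul_factorial l k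
    rwa [Nat.add_comm l k] at h
  have e1 := Nat.add_choose_mul_factorial_mul_factorial (k + l) m
  have e3 := Nat.add_choose_mul_factorial_mul_factorial k m
  have e4 : ((k + m) + l).choose (k + m) * l.factorial * (k + m).factorial
      = ((k + m) + l).factorial := by
    have h := Nat.add_choose_mul_factorial_mul_factorial l (k + m)
    rwa [Nat.add_comm l (k + m)] at h
  have hfact : ((k + l) + m).factorial = ((k + m) + l).factorial := by
    congr 1
    omega
  calc ((k + l) + m).choose m * ((k + l).choose k)
        * (k.factorial * l.factorial * m.factorial)
      = ((k + l).choose k * l.factorial * k.factorial)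
          * (((k + l) + m).choose m * m.factorial) := by ring
    _ = (k + l).factorial * (((k + l) + m).choose m * m.factorial) := by rw [e2]
    _ = ((k + l) + m).choose m * (k + l).factorial * m.factorial := by ring
    _ = ((k + m) + l).factorial := by rw [e1, hfact]
    _ = ((k + m) + l).choose (k + m) * l.factorial * (k + m).factorial := e4.symm
    _ = ((k + m) + l).choose (k + m) * l.factorial
          * ((k + m).choose m * k.factorial * m.factorial) := by rw [e3]
    _ = ((k + m) + l).choose (k + m) * ((k + m).choose m)
          * (k.factorial * l.factorial * m.factorial) := by ring


/-! ### The jumping-numbers/sorted-values identification -/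

lemma sum_jump {A : Type*} [DecidableEq A] (s : Finset A) (gk : A → ℝ) (D : ℝ → ℕ)
    (f : ℝ → ℝ)
    (hlo : ∀ t : ℝ, ((s.filter (fun α => t < gk α)).card ≤ D t))
    (hup : ∀ t : ℝ, (D t ≤ (s.filter (fun α => t ≤ gk α)).card))
    (hbdd : ∃ t₁ : ℝ, ∀ t, 0 < D t → t ≤ t₁)
    (hfull : ∃ t₀ : ℝ, s.card ≤ D t₀) :
    ∑ j ∈ Finset.range s.card, f (sSup {t : ℝ | j + 1 ≤ D t}) = ∑ α ∈ s, f (gk α) := by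
  classical
  set M : Multiset ℝ := s.val.map gk with hM
  set L : List ℝ := Multiset.sort M (· ≥ ·) with hL
  have hsort : L.Pairwise (· ≥ ·) := Multiset.pairwise_sort _ _
  have hlen : L.length = s.card := by
    rw [hL, Multiset.length_sort, hM, Multiset.card_map]
    rfl
  have hcount : ∀ (p : ℝ → Prop) [DecidablePred p],
      (L.filter (fun x => decide (p x))).length = (s.filter (fun α => p (gk α))).card := by
    intro p hp
    have h1 : (L.filter (fun x => decide (p x))).length = Multiset.countP p (↑L) := by
      rw [Multiset.coe_countP, List.countP_eq_length_filter]
    rw [h1, hL, Multiset.sort_eq, hM, Multiset.countP_map, ← Finset.filter_val]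
    rfl
  have hE : ∀ j, j < s.card → sSup {t : ℝ | j + 1 ≤ D t} = L.getD j 0 := by
    intro j hj
    have hjL : j < L.length := by rw [hlen]; exact hj
    obtain ⟨t₁, ht₁⟩ := hbdd
    have hSb : BddAbove {t : ℝ | j + 1 ≤ D t} := ⟨t₁, fun t ht => ht₁ t (by
      simp only [Set.mem_setOf_eq] at ht
      omega)⟩
    obtain ⟨t₀, ht₀⟩ := hfull
    have hSne : Set.Nonempty {t : ℝ | j + 1 ≤ D t} := ⟨t₀, by
      simp only [Set.mem_setOf_eq]
      omega⟩
    apply le_antisymm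
    · apply csSup_le hSne
      intro t ht
      simp only [Set.mem_setOf_eq] at ht
      apply sorted_le_getD_of_countP hsort hjL
      rw [hcount (fun x => t ≤ x)]
      exact le_trans ht (hup t)
    · apply le_of_forall_lt
      intro c hc
      obtain ⟨t, hct, htL⟩ := exists_between hc
      have htS : t ∈ {t : ℝ | j + 1 ≤ D t} := by
        have h2 := sorted_le_countP_of_lt hsort hjL htL
        rw [hcount (fun x => t < x)] at h2
        simp only [Set.mem_setOf_eq]
        exact le_trans h2 (hlo t)
      exact lt_of_lt_of_le hct (le_csSup hSb htS)
  calc ∑ j ∈ Finset.range s.card, f (sSup {t : ℝ | j + 1 ≤ D t})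
      = ∑ j ∈ Finset.range s.card, f (L.getD j 0) :=
        Finset.sum_congr rfl (fun j hj => by rw [hE j (Finset.mem_range.1 hj)])
    _ = ∑ j ∈ Finset.range L.length, f (L.getD j 0) := by rw [hlen]
    _ = (L.map f).sum := sum_range_getD L f
    _ = ∑ α ∈ s, f (gk α) := by
        have h4 : ((L.map f).sum : ℝ) = (Multiset.map f M).sum := by
          conv_rhs => rw [← Multiset.sort_eq M (· ≥ ·), ← hL]
          rw [Multiset.map_coe, Multiset.sum_coe]
        rw [h4, Finset.sum]
        rw [hM, Multiset.map_map]
        rfl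


set_option maxHeartbeats 1000000 in
/-- The core convexity/coupling inequality. -/
lemma core (m k l : ℕ) (hk : 1 ≤ k) (hl : 1 ≤ l) (φ : ℝ → ℝ)
    (hconv : ConvexOn ℝ Set.univ φ) (hantiφ : Antitone φ)
    (g : ℕ → (Fin (m+1) →₀ ℕ) → ℝ)
    (hsuper : ∀ α β, α ∈ Mon (m+1) k → β ∈ Mon (m+1) l →
      g k α + g l β ≤ g (k+l) (α+β)) :
    ((k : ℝ) + l) * (((k+l).choose k : ℕ) : ℝ)
        * (∑ γ ∈ Mon (m+1) (k+l), φ (g (k+l) γ / ((k : ℝ) + l)))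
      ≤ (k : ℝ) * (((k+m+l).choose (k+m) : ℕ) : ℝ) * (∑ α ∈ Mon (m+1) k, φ (g k α / (k : ℝ)))
        + (l : ℝ) * (((l+m+k).choose (l+m) : ℕ) : ℝ)
          * (∑ β ∈ Mon (m+1) l, φ (g l β / (l : ℝ))) := by
  classical
  have hkR : (0:ℝ) < (k : ℝ) := by exact_mod_cast hk
  have hlR : (0:ℝ) < (l : ℝ) := by exact_mod_cast hl
  have hklR : (0:ℝ) < (k : ℝ) + l := by linarith
  set P := Mon (m+1) k ×ˢ Mon (m+1) l with hP
  set W : (Fin (m+1) →₀ ℕ) × (Fin (m+1) →₀ ℕ) → ℕ :=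
    fun p => ∏ i, (p.1 i + p.2 i).choose (p.1 i) with hW
  have hmaps : ∀ p ∈ P, p.1 + p.2 ∈ Mon (m+1) (k+l) := by
    intro p hp
    rw [hP, Finset.mem_product] at hp
    rw [mem_Mon]
    have h1 := mem_Mon.1 hp.1
    have h2 := mem_Mon.1 hp.2
    have h3 : ∀ i, (p.1 + p.2) i = p.1 i + p.2 i := fun i => rfl
    simp_rw [h3]
    rw [Finset.sum_add_distrib, h1, h2]
  -- E1 : regroup the sum over γ as a sum over pairs
  have E1 : (((k+l).choose k : ℕ) : ℝ)
        * (∑ γ ∈ Mon (m+1) (k+l), φ (g (k+l) γ / ((k : ℝ) + l)))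
      = ∑ p ∈ P, (W p : ℝ) * φ (g (k+l) (p.1 + p.2) / ((k : ℝ) + l)) := by
    rw [Finset.mul_sum]
    rw [← Finset.sum_fiberwise_of_maps_to hmaps
      (fun p => (W p : ℝ) * φ (g (k+l) (p.1 + p.2) / ((k : ℝ) + l)))]
    apply Finset.sum_congr rfl
    intro γ hγ
    have hfs := fibersum (m+1) k l γ (mem_Mon.1 hγ)
    have hcast : (((k+l).choose k : ℕ) : ℝ)
        = ∑ p ∈ P.filter (fun p => p.1 + p.2 = γ), (W p : ℝ) := by
      rw [← Nat.cast_sum]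
      exact_mod_cast congrArg (Nat.cast : ℕ → ℝ) hfs.symm
    rw [hcast, Finset.sum_mul]
    apply Finset.sum_congr rfl
    intro p hp
    have hpγ : p.1 + p.2 = γ := by
      have := (Finset.mem_filter.1 hp).2
      exact this
    rw [hpγ]
  -- E2 : row sums
  have E2 : ∑ p ∈ P, (W p : ℝ) * ((k : ℝ) * φ (g k p.1 / (k : ℝ)))
      = (k : ℝ) * (((k+m+l).choose (k+m) : ℕ) : ℝ)
          * (∑ α ∈ Mon (m+1) k, φ (g k α / (k : ℝ))) := by
    rw [hP, Finset.sum_product]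
    have hrow : ∀ α ∈ Mon (m+1) k,
        ∑ β ∈ Mon (m+1) l, (W (α, β) : ℝ) * ((k : ℝ) * φ (g k α / (k : ℝ)))
        = (((k+m+l).choose (k+m) : ℕ) : ℝ) * ((k : ℝ) * φ (g k α / (k : ℝ))) := by
      intro α hα
      rw [← Finset.sum_mul]
      congr 1
      rw [← Nat.cast_sum]
      exact_mod_cast congrArg (Nat.cast : ℕ → ℝ) (rowsum m k l α (mem_Mon.1 hα))
    rw [Finset.sum_congr rfl hrow, Finset.mul_sum]
    apply Finset.sum_congr rfl
    intro α _
    ring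
  -- E3 : column sums
  have E3 : ∑ p ∈ P, (W p : ℝ) * ((l : ℝ) * φ (g l p.2 / (l : ℝ)))
      = (l : ℝ) * (((l+m+k).choose (l+m) : ℕ) : ℝ)
          * (∑ β ∈ Mon (m+1) l, φ (g l β / (l : ℝ))) := by
    rw [hP, Finset.sum_product, Finset.sum_comm]
    have hcol : ∀ β ∈ Mon (m+1) l,
        ∑ α ∈ Mon (m+1) k, (W (α, β) : ℝ) * ((l : ℝ) * φ (g l β / (l : ℝ)))
        = (((l+m+k).choose (l+m) : ℕ) : ℝ) * ((l : ℝ) * φ (g l β / (l : ℝ))) := by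
      intro β hβ
      rw [← Finset.sum_mul]
      congr 1
      rw [← Nat.cast_sum]
      exact_mod_cast congrArg (Nat.cast : ℕ → ℝ) (colsum m k l β (mem_Mon.1 hβ))
    rw [Finset.sum_congr rfl hcol, Finset.mul_sum]
    apply Finset.sum_congr rfl
    intro β _
    ring
  -- pointwise convexity bound
  have hpoint : ∀ p ∈ P, ((k : ℝ) + l) * φ (g (k+l) (p.1 + p.2) / ((k : ℝ) + l))
      ≤ (k : ℝ) * φ (g k p.1 / (k : ℝ)) + (l : ℝ) * φ (g l p.2 / (l : ℝ)) := by
    intro p hp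
    rw [hP, Finset.mem_product] at hp
    have ha : (0:ℝ) ≤ (k : ℝ) / ((k : ℝ) + l) := by positivity
    have hb : (0:ℝ) ≤ (l : ℝ) / ((k : ℝ) + l) := by positivity
    have hab : (k : ℝ) / ((k : ℝ) + l) + (l : ℝ) / ((k : ℝ) + l) = 1 := by
      field_simp
    have hcx := hconv.2 (Set.mem_univ (g k p.1 / (k : ℝ))) (Set.mem_univ (g l p.2 / (l : ℝ)))
      ha hb hab
    simp only [smul_eq_mul] at hcx
    have hxy : (k : ℝ) / ((k : ℝ) + l) * (g k p.1 / (k : ℝ))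
        + (l : ℝ) / ((k : ℝ) + l) * (g l p.2 / (l : ℝ))
        = (g k p.1 + g l p.2) / ((k : ℝ) + l) := by
      field_simp
    rw [hxy] at hcx
    have h1 : φ (g (k+l) (p.1 + p.2) / ((k : ℝ) + l))
        ≤ φ ((g k p.1 + g l p.2) / ((k : ℝ) + l)) := by
      apply hantiφ
      gcongr
      exact hsuper p.1 p.2 hp.1 hp.2
    have h2 := h1.trans hcx
    calc ((k : ℝ) + l) * φ (g (k+l) (p.1 + p.2) / ((k : ℝ) + l))
        ≤ ((k : ℝ) + l) * ((k : ℝ) / ((k : ℝ) + l) * φ (g k p.1 / (k : ℝ))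
            + (l : ℝ) / ((k : ℝ) + l) * φ (g l p.2 / (l : ℝ))) :=
          mul_le_mul_of_nonneg_left h2 hklR.le
      _ = (k : ℝ) * φ (g k p.1 / (k : ℝ)) + (l : ℝ) * φ (g l p.2 / (l : ℝ)) := by
          field_simp
  -- assemble
  calc ((k : ℝ) + l) * (((k+l).choose k : ℕ) : ℝ)
          * (∑ γ ∈ Mon (m+1) (k+l), φ (g (k+l) γ / ((k : ℝ) + l)))
      = ∑ p ∈ P, (W p : ℝ) * (((k : ℝ) + l) * φ (g (k+l) (p.1 + p.2) / ((k : ℝ) + l))) := by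
        rw [mul_assoc, E1, Finset.mul_sum]
        apply Finset.sum_congr rfl
        intro p _
        ring
    _ ≤ ∑ p ∈ P, (W p : ℝ) * ((k : ℝ) * φ (g k p.1 / (k : ℝ))
          + (l : ℝ) * φ (g l p.2 / (l : ℝ))) := by
        apply Finset.sum_le_sum
        intro p hp
        exact mul_le_mul_of_nonneg_left (hpoint p hp) (Nat.cast_nonneg _)
    _ = (∑ p ∈ P, (W p : ℝ) * ((k : ℝ) * φ (g k p.1 / (k : ℝ))))
          + ∑ p ∈ P, (W p : ℝ) * ((l : ℝ) * φ (g l p.2 / (l : ℝ))) := by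
        rw [← Finset.sum_add_distrib]
        apply Finset.sum_congr rfl
        intro p _
        ring
    _ = _ := by rw [E2, E3]


end Stmt8

open Stmt8 in
/-- For a submultiplicative filtration `F` on the graded algebra of homogeneous
polynomials `S_k ⊆ ℂ[X_1,…,X_n]` and a convex non-increasing function `φ`, the sequence
`u k = (k / N_k) Σ_{j=1}^{N_k} φ(e_j(k)/k)` built from the jumping numbers
`e_j(k) = sup {t | dim F^t S_k ≥ j}` is subadditive. -/
theorem stmt8 (n : ℕ) (hn : 1 ≤ n)
    (F : ℕ → ℝ → Submodule ℂ (MvPolynomial (Fin n) ℂ))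
    (hFle : ∀ k t, F k t ≤ MvPolynomial.homogeneousSubmodule (Fin n) ℂ k)
    (hanti : ∀ k, Antitone (F k))
    (hsmall : ∀ k, ∃ t₀ : ℝ, ∀ t ≤ t₀, F k t = MvPolynomial.homogeneousSubmodule (Fin n) ℂ k)
    (hbig : ∀ k, ∃ t₁ : ℝ, ∀ t, t₁ ≤ t → F k t = ⊥)
    (hmul : ∀ (t s : ℝ) (k l : ℕ) (x y : MvPolynomial (Fin n) ℂ),
      x ∈ F k t → y ∈ F l s → x * y ∈ F (k + l) (t + s))
    (φ : ℝ → ℝ) (hconv : ConvexOn ℝ Set.univ φ) (hantiφ : Antitone φ)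
    (N : ℕ → ℕ) (hN : ∀ k, N k = Module.finrank ℂ (MvPolynomial.homogeneousSubmodule (Fin n) ℂ k))
    (e : ℕ → ℕ → ℝ) (he : ∀ k j, e k j = sSup {t : ℝ | j ≤ Module.finrank ℂ (F k t)})
    (u : ℕ → ℝ)
    (hu : ∀ k, u k = ((k : ℝ) / (N k : ℝ)) *
      ∑ j ∈ Finset.range (N k), φ (e k (j + 1) / (k : ℝ))) :
    ∀ k l : ℕ, 1 ≤ k → 1 ≤ l → u (k + l) ≤ u k + u l := by
  intro k l hk hl
  obtain ⟨m, rfl⟩ : ∃ m, n = m + 1 := ⟨n - 1, by omega⟩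
  classical
  set T : ℕ → (Fin (m+1) →₀ ℕ) → Set ℝ :=
    fun d α => {t : ℝ | ∃ p ∈ F d t, p ≠ 0 ∧ lm p = toLex α} with hT
  set g : ℕ → (Fin (m+1) →₀ ℕ) → ℝ := fun d α => sSup (T d α) with hg
  have hTne : ∀ d (α : Fin (m+1) →₀ ℕ), α ∈ Mon (m+1) d → (T d α).Nonempty := by
    intro d α hα
    obtain ⟨t₀, ht₀⟩ := hsmall d
    refine ⟨t₀, ?_⟩
    simp only [hT, Set.mem_setOf_eq]
    refine ⟨MvPolynomial.monomial α 1, ?_, monomial_one_ne_zero α, lm_monomial α⟩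
    rw [ht₀ t₀ le_rfl, MvPolynomial.mem_homogeneousSubmodule]
    exact MvPolynomial.isHomogeneous_monomial _
      (by rw [degree_eq_sum_univ, ← @mem_Mon (m+1) d]; exact hα)
  have hTbdd : ∀ d (α : Fin (m+1) →₀ ℕ), BddAbove (T d α) := by
    intro d α
    obtain ⟨t₁, ht₁⟩ := hbig d
    refine ⟨t₁, fun t ht => ?_⟩
    simp only [hT, Set.mem_setOf_eq] at ht
    obtain ⟨p, hp, hpne, -⟩ := ht
    by_contra hcon
    push_neg at hcon
    rw [ht₁ t hcon.le] at hp
    exact hpne ((Submodule.mem_bot ℂ).1 hp)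
  have hsuper : ∀ (α β : Fin (m+1) →₀ ℕ), α ∈ Mon (m+1) k → β ∈ Mon (m+1) l →
      g k α + g l β ≤ g (k+l) (α+β) := by
    intro α β hα hβ
    have hmem : ∀ a ∈ T k α, ∀ b ∈ T l β, a + b ∈ T (k+l) (α+β) := by
      intro a ha b hb
      simp only [hT, Set.mem_setOf_eq] at ha hb ⊢
      obtain ⟨p, hp, hpne, hplm⟩ := ha
      obtain ⟨q, hq, hqne, hqlm⟩ := hb
      refine ⟨p * q, hmul a b k l p q hp hq, mul_ne_zero hpne hqne, ?_⟩
      rw [lm_mul hpne hqne, hplm, hqlm]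
      rfl
    have h1 : g k α ≤ g (k+l) (α+β) - g l β := by
      simp only [hg]
      apply csSup_le (hTne k α hα)
      intro a ha
      rw [le_sub_comm]
      apply csSup_le (hTne l β hβ)
      intro b hb
      rw [le_sub_iff_add_le, add_comm]
      exact le_csSup (hTbdd (k+l) (α+β)) (hmem a ha b hb)
    linarith
  have hfin : ∀ d t, Module.finrank ℂ ↥(F d t) = (DF (m+1) d (F d t)).card :=
    fun d t => finrank_eq_card_DF _ (hFle d t)
  have hNcard : ∀ d, N d = (Mon (m+1) d).card := by
    intro d
    rw [hN d, finrank_homogeneous]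
  have hsumeq : ∀ d, (∑ j ∈ Finset.range (N d), φ (e d (j + 1) / (d : ℝ)))
      = ∑ α ∈ Mon (m+1) d, φ (g d α / (d : ℝ)) := by
    intro d
    have hlo : ∀ t : ℝ, ((Mon (m+1) d).filter (fun α => t < g d α)).card
        ≤ Module.finrank ℂ ↥(F d t) := by
      intro t
      rw [hfin d t]
      apply Finset.card_le_card
      intro α hα
      rw [Finset.mem_filter] at hα
      obtain ⟨hα1, hα2⟩ := hα
      rw [mem_DF]
      refine ⟨hα1, ?_⟩
      simp only [hg] at hα2
      obtain ⟨t', ht', htt'⟩ := exists_lt_of_lt_csSup (hTne d α hα1) hα2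
      simp only [hT, Set.mem_setOf_eq] at ht'
      obtain ⟨p, hp, hpne, hplm⟩ := ht'
      exact ⟨p, hanti d htt'.le hp, hpne, hplm⟩
    have hup : ∀ t : ℝ, Module.finrank ℂ ↥(F d t)
        ≤ ((Mon (m+1) d).filter (fun α => t ≤ g d α)).card := by
      intro t
      rw [hfin d t]
      apply Finset.card_le_card
      intro α hα
      rw [mem_DF] at hα
      obtain ⟨hα1, p, hp, hpne, hplm⟩ := hα
      rw [Finset.mem_filter]
      refine ⟨hα1, ?_⟩
      simp only [hg]
      apply le_csSup (hTbdd d α)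
      simp only [hT, Set.mem_setOf_eq]
      exact ⟨p, hp, hpne, hplm⟩
    have hbddD : ∃ t₁ : ℝ, ∀ t, 0 < Module.finrank ℂ ↥(F d t) → t ≤ t₁ := by
      obtain ⟨t₁, ht₁⟩ := hbig d
      refine ⟨t₁, fun t ht => ?_⟩
      by_contra hcon
      push_neg at hcon
      rw [ht₁ t hcon.le] at ht
      rw [finrank_bot ℂ (MvPolynomial (Fin (m+1)) ℂ)] at ht
      omega
    have hfull : ∃ t₀ : ℝ, (Mon (m+1) d).card ≤ Module.finrank ℂ ↥(F d t₀) := by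
      obtain ⟨t₀, ht₀⟩ := hsmall d
      exact ⟨t₀, by rw [ht₀ t₀ le_rfl, finrank_homogeneous]⟩
    have happ := sum_jump (Mon (m+1) d) (g d) (fun t => Module.finrank ℂ ↥(F d t))
      (fun x => φ (x / (d : ℝ))) hlo hup hbddD hfull
    rw [hNcard d, ← happ]
    apply Finset.sum_congr rfl
    intro j _
    rw [he d (j + 1)]
  have hcore := core m k l hk hl φ hconv hantiφ g hsuper
  rw [hu (k+l), hu k, hu l, hsumeq (k+l), hsumeq k, hsumeq l]
  push_cast
  have hkR : (0:ℝ) < (k : ℝ) := by exact_mod_cast hk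
  have hlR : (0:ℝ) < (l : ℝ) := by exact_mod_cast hl
  have hNk : N k = (m+k).choose m := by rw [hNcard k, card_Mon]
  have hNl : N l = (m+l).choose m := by rw [hNcard l, card_Mon]
  have hNC : N (k+l) = (m+(k+l)).choose m := by rw [hNcard (k+l), card_Mon]
  have hNkpos : (0:ℝ) < (N k : ℝ) := by
    have : 0 < N k := by rw [hNk]; exact Nat.choose_pos (Nat.le_add_right m k)
    exact_mod_cast this
  have hNlpos : (0:ℝ) < (N l : ℝ) := by
    have : 0 < N l := by rw [hNl]; exact Nat.choose_pos (Nat.le_add_right m l)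
    exact_mod_cast this
  have hNCpos : (0:ℝ) < (N (k+l) : ℝ) := by
    have : 0 < N (k+l) := by rw [hNC]; exact Nat.choose_pos (Nat.le_add_right m (k+l))
    exact_mod_cast this
  have hc3pos : (0:ℝ) < (((k+l).choose k : ℕ) : ℝ) := by
    have : 0 < (k+l).choose k := Nat.choose_pos (Nat.le_add_right k l)
    exact_mod_cast this
  have hcross1 : N (k+l) * ((k+l).choose k) = N k * ((k+m+l).choose (k+m)) := by
    rw [hNk, hNC, Nat.add_comm m (k+l), Nat.add_comm m k, cross1 m k l]
    ring
  have hcross2 : N (k+l) * ((k+l).choose k) = N l * ((l+m+k).choose (l+m)) := by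
    rw [hNl, hNC, Nat.add_comm m (k+l), Nat.add_comm m l]
    have h := cross1 m l k
    rw [Nat.add_comm l k] at h
    rw [show (k+l).choose k = (k+l).choose l from Nat.choose_symm_add, h]
    ring
  have X1 : ((N (k+l) : ℝ)) * (((k+l).choose k : ℕ) : ℝ)
      = (N k : ℝ) * (((k+m+l).choose (k+m) : ℕ) : ℝ) := by
    exact_mod_cast congrArg (Nat.cast : ℕ → ℝ) hcross1
  have X2 : ((N (k+l) : ℝ)) * (((k+l).choose k : ℕ) : ℝ)
      = (N l : ℝ) * (((l+m+k).choose (l+m) : ℕ) : ℝ) := by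
    exact_mod_cast congrArg (Nat.cast : ℕ → ℝ) hcross2
  set SA := ∑ α ∈ Mon (m+1) k, φ (g k α / (k : ℝ)) with hSA
  set SB := ∑ β ∈ Mon (m+1) l, φ (g l β / (l : ℝ)) with hSB
  set SC := ∑ γ ∈ Mon (m+1) (k+l), φ (g (k+l) γ / ((k : ℝ) + l)) with hSC
  rw [← mul_le_mul_iff_left₀ (mul_pos hNCpos hc3pos)]
  have hL : ((((k:ℝ)+l) / (N (k+l) : ℝ)) * SC) * ((N (k+l) : ℝ) * (((k+l).choose k : ℕ) : ℝ))
      = ((k:ℝ)+l) * (((k+l).choose k : ℕ) : ℝ) * SC := by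
    field_simp
  have t1 : (((k:ℝ)/(N k : ℝ)) * SA) * ((N (k+l) : ℝ) * (((k+l).choose k : ℕ) : ℝ))
      = (k:ℝ) * (((k+m+l).choose (k+m) : ℕ) : ℝ) * SA := by
    rw [X1]
    field_simp
  have t2 : (((l:ℝ)/(N l : ℝ)) * SB) * ((N (k+l) : ℝ) * (((k+l).choose k : ℕ) : ℝ))
      = (l:ℝ) * (((l+m+k).choose (l+m) : ℕ) : ℝ) * SB := by
    rw [X2]
    field_simp
  have hR : (((k:ℝ)/(N k : ℝ)) * SA + ((l:ℝ)/(N l : ℝ)) * SB)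
        * ((N (k+l) : ℝ) * (((k+l).choose k : ℕ) : ℝ))
      = (k:ℝ) * (((k+m+l).choose (k+m) : ℕ) : ℝ) * SA
        + (l:ℝ) * (((l+m+k).choose (l+m) : ℕ) : ℝ) * SB := by
    rw [add_mul, t1, t2]
  rw [hL, hR]
  exact hcore
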